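/- If M is a set of disjoint pairs of keys from Σ^b such that the set of diff-keys {x △ y : {x,y} ∈ M} is linearly independent over F_2, and g : Σ^b → Σ is a simple tabulation function with uniformly random tables (lifted to generalized keys), then the probability that g(x) = g(y) simultaneously for all pairs {x,y} ∈ M equals 1/|Σ|^{|M|}. -/

import Mathlib

/-- The indicator vector in `F₂^{[b]×Σ}` of the position characters of a key. -/
def keyVec {b : ℕ} {Alph : Type*} [DecidableEq Alph] (x : Fin b → Alph) :
    Fin b × Alph → ZMod 2 := fun p => if x p.1 = p.2 then 1 else 0

private lemma keysum {b : ℕ} {A : Type*} [DecidableEq A] [Fintype A]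
    (x : Fin b → A) (u : Fin b × A → ZMod 2) :
    ∑ p : Fin b × A, keyVec x p * u p = ∑ i, u (i, x i) := by
  rw [Fintype.sum_prod_type]
  refine Finset.sum_congr rfl fun i _ => ?_
  simp [keyVec, ite_mul]

private lemma z2 : ∀ a b : ZMod 2, a + b = 0 ↔ a = b := by decide

/-- If `M` is a set of disjoint pairs of keys whose diff-keys are linearly independent
over `F₂`, then for a uniformly random simple tabulation `g : Σ^b → Σ`
(with `Σ = F₂^s`), the probability that `g(x) = g(y)` for all pairs `{x,y} ∈ M`
is exactly `1/|Σ|^{|M|}`. -/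
theorem stmt7 {b s : ℕ}
    (M : Finset ((Fin b → (Fin s → ZMod 2)) × (Fin b → (Fin s → ZMod 2))))
    (hne : ∀ e ∈ M, e.1 ≠ e.2)
    (hdisj : ∀ e ∈ M, ∀ f ∈ M, e ≠ f →
      e.1 ≠ f.1 ∧ e.1 ≠ f.2 ∧ e.2 ≠ f.1 ∧ e.2 ≠ f.2)
    (hind : LinearIndependent (ZMod 2)
      (fun e : M => keyVec e.1.1 + keyVec e.1.2)) :
    (Finset.univ.filter (fun T : Fin b → (Fin s → ZMod 2) → (Fin s → ZMod 2) =>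
        ∀ e ∈ M, (∑ i, T i (e.1 i)) = ∑ i, T i (e.2 i))).card
        * (Fintype.card (Fin s → ZMod 2)) ^ M.card
      = Fintype.card (Fin b → (Fin s → ZMod 2) → (Fin s → ZMod 2)) := by
  classical
  set v : M → ((Fin b × (Fin s → ZMod 2)) → ZMod 2) :=
    (fun e : M => keyVec e.1.1 + keyVec e.1.2) with hv
  have hvinj : Function.Injective v := hind.injective
  -- dual family
  have hs : LinearIndepOn (ZMod 2) id (Set.range v) :=
    (linearIndepOn_id_range_iff hvinj).mpr hind
  let B := Module.Basis.extend hs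
  let idx : M → hs.extend (Set.subset_univ _) :=
    fun e => ⟨v e, hs.subset_extend _ ⟨e, rfl⟩⟩
  have hidxinj : Function.Injective idx := fun e e' h =>
    hvinj (congrArg Subtype.val h)
  let w : M → (Fin b × (Fin s → ZMod 2)) → ZMod 2 := fun e p => B.coord (idx e) (Pi.single p 1)
  have hdual : ∀ e e' : M, ∑ p, v e' p * w e p = if e' = e then 1 else 0 := by
    intro e e'
    have h1 : ∑ p, v e' p • (Pi.single p 1 : (Fin b × (Fin s → ZMod 2)) → ZMod 2) = v e' := by
      funext q
      simp [Finset.sum_apply, Pi.single_apply, mul_ite]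
    have h2 : B.coord (idx e) (v e') = ∑ p, v e' p * w e p := by
      conv_lhs => rw [← h1]
      rw [map_sum]
      exact Finset.sum_congr rfl fun p _ => by rw [map_smul, smul_eq_mul]
    rw [← h2]
    have h3 : v e' = B (idx e') := by
      have := Module.Basis.extend_apply_self hs (idx e')
      exact this.symm
    rw [h3, Module.Basis.coord_apply, B.repr_self_apply]
    by_cases h : e' = e
    · simp [h]
    · have h4 : idx e' ≠ idx e := fun hc => h (hidxinj hc)
      simp [h, h4]
  -- the additive map
  let Φ : ((Fin b × (Fin s → ZMod 2)) → (Fin s → ZMod 2)) →+ (M → (Fin s → ZMod 2)) :=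
  { toFun := fun T e j => ∑ p, v e p * T p j
    map_zero' := by funext e j; simp
    map_add' := by intro T U; funext e j; simp [mul_add, Finset.sum_add_distrib] }
  have hΦ : ∀ (T : (Fin b × (Fin s → ZMod 2)) → (Fin s → ZMod 2)) (e : M) (j : Fin s),
      Φ T e j = (∑ i, T (i, e.1.1 i) j) + ∑ i, T (i, e.1.2 i) j := by
    intro T e j
    show ∑ p, v e p * T p j = _
    rw [← keysum e.1.1 (fun p => T p j), ← keysum e.1.2 (fun p => T p j),
      ← Finset.sum_add_distrib]
    refine Finset.sum_congr rfl fun p _ => ?_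
    simp [hv, keyVec, add_mul]
  have hsurj : Function.Surjective Φ := by
    intro c
    refine ⟨fun p j => ∑ e, w e p * c e j, ?_⟩
    funext e j
    show ∑ p, v e p * ∑ e', w e' p * c e' j = c e j
    have : ∀ p, v e p * ∑ e', w e' p * c e' j = ∑ e', (v e p * w e' p) * c e' j := by
      intro p; rw [Finset.mul_sum]; exact Finset.sum_congr rfl fun e' _ => by ring
    simp_rw [this]
    rw [Finset.sum_comm]
    have : ∀ e' : M, ∑ p, (v e p * w e' p) * c e' j
        = (if e = e' then 1 else 0) * c e' j := by
      intro e'; rw [← Finset.sum_mul, hdual e' e]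
    simp_rw [this]
    simp
  -- counting
  have hcard : Nat.card ((Fin b × (Fin s → ZMod 2)) → (Fin s → ZMod 2))
      = Nat.card (M → (Fin s → ZMod 2)) * Nat.card Φ.ker := by
    rw [AddSubgroup.card_eq_card_quotient_mul_card_addSubgroup Φ.ker]
    congr 1
    exact Nat.card_congr (QuotientAddGroup.quotientKerEquivOfSurjective Φ hsurj).toEquiv
  -- the filter set has the same cardinality as the kernel
  have hker : (Finset.univ.filter (fun T : Fin b → (Fin s → ZMod 2) → (Fin s → ZMod 2) =>
        ∀ e ∈ M, (∑ i, T i (e.1 i)) = ∑ i, T i (e.2 i))).card = Nat.card Φ.ker := by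
    rw [Nat.card_eq_fintype_card, ← Fintype.card_coe]
    refine Fintype.card_congr ?_
    refine
      { toFun := fun T => ⟨fun p => T.1 p.1 p.2, ?_⟩
        invFun := fun U => ⟨fun i c => U.1 (i, c), ?_⟩
        left_inv := fun T => by ext i c; rfl
        right_inv := fun U => by ext p; rfl }
    · have hT := (Finset.mem_filter.mp T.2).2
      rw [AddMonoidHom.mem_ker]
      funext e j
      rw [Pi.zero_apply, Pi.zero_apply, hΦ, z2 _ _]
      have := congrFun (hT e.1 e.2) j
      simpa [Finset.sum_apply] using this
    · have hU := U.2
      rw [AddMonoidHom.mem_ker] at hU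
      refine Finset.mem_filter.mpr ⟨Finset.mem_univ _, fun e he => ?_⟩
      funext j
      have := congrFun (congrFun hU ⟨e, he⟩) j
      rw [Pi.zero_apply, Pi.zero_apply, hΦ, z2 _ _] at this
      simpa [Finset.sum_apply] using this
  rw [hker]
  have h1 : Fintype.card (Fin b → (Fin s → ZMod 2) → (Fin s → ZMod 2)) = Nat.card ((Fin b × (Fin s → ZMod 2)) → (Fin s → ZMod 2)) := by
    rw [Nat.card_eq_fintype_card]
    exact (Fintype.card_congr (Equiv.curry _ _ _)).symm
  have h2 : Nat.card (M → (Fin s → ZMod 2)) = Fintype.card (Fin s → ZMod 2) ^ M.card := by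
    rw [Nat.card_eq_fintype_card, Fintype.card_fun, Fintype.card_coe]
  rw [h1, hcard, h2, mul_comm]
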